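/- For all real x₁, x₂: ((3x₁² − 2x₁x₂)² + x₁⁴)^{1/2} ≥ |x₁³ − x₁²x₂|^{2/3}, i.e., the function f(x₁,x₂) = x₁³ − x₁²x₂ satisfies ‖∇f(x)‖ ≥ |f(x)|^{2/3} everywhere; equivalently, ψ(t) = 3t^{1/3} is a desingularizing function for f on ℝ². -/
import Mathlib


theorem stmt17 (x₁ x₂ : ℝ) :
    |x₁ ^ 3 - x₁ ^ 2 * x₂| ^ ((2 : ℝ) / 3) ≤
      Real.sqrt ((3 * x₁ ^ 2 - 2 * x₁ * x₂) ^ 2 + x₁ ^ 4) := by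
  set f : ℝ := x₁ ^ 3 - x₁ ^ 2 * x₂ with hf
  set S : ℝ := (3 * x₁ ^ 2 - 2 * x₁ * x₂) ^ 2 + x₁ ^ 4 with hS
  have hS0 : (0 : ℝ) ≤ S := by positivity
  have key : f ^ 4 ≤ S ^ 3 := by
    set Q : ℝ := (3 * x₁ - 2 * x₂) ^ 2 + x₁ ^ 2 with hQ
    have hQ0 : (0 : ℝ) ≤ Q := by positivity
    have hQ1 : x₁ ^ 2 ≤ Q := by nlinarith [sq_nonneg (3 * x₁ - 2 * x₂)]
    have hQ2 : (x₁ - x₂) ^ 2 ≤ Q := by nlinarith [sq_nonneg (2 * x₁ - x₂)]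
    have key2 : x₁ ^ 2 * (x₁ - x₂) ^ 4 ≤ Q ^ 3 := by
      calc x₁ ^ 2 * (x₁ - x₂) ^ 4 = x₁ ^ 2 * ((x₁ - x₂) ^ 2 * (x₁ - x₂) ^ 2) := by ring
        _ ≤ Q * (Q * Q) := by
            apply mul_le_mul hQ1 (mul_le_mul hQ2 hQ2 (sq_nonneg _) hQ0)
              (by positivity) hQ0
        _ = Q ^ 3 := by ring
    have hx6 : (0 : ℝ) ≤ x₁ ^ 6 := by positivity
    calc f ^ 4 = x₁ ^ 6 * (x₁ ^ 2 * (x₁ - x₂) ^ 4) := by rw [hf]; ring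
      _ ≤ x₁ ^ 6 * Q ^ 3 := mul_le_mul_of_nonneg_left key2 hx6
      _ = S ^ 3 := by rw [hS, hQ]; ring
  have h1 : |f| ^ ((2 : ℝ) / 3) = (|f| ^ (4 : ℕ)) ^ ((1 : ℝ) / 6) := by
    rw [← Real.rpow_natCast |f| 4, ← Real.rpow_mul (abs_nonneg f)]
    norm_num
  have h2 : Real.sqrt S = (S ^ (3 : ℕ)) ^ ((1 : ℝ) / 6) := by
    rw [Real.sqrt_eq_rpow, ← Real.rpow_natCast S 3, ← Real.rpow_mul hS0]
    norm_num
  rw [h1, h2]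
  apply Real.rpow_le_rpow (by positivity) _ (by norm_num)
  calc |f| ^ 4 = f ^ 4 := by rw [← abs_pow, abs_of_nonneg (by positivity)]
    _ ≤ S ^ 3 := key
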